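/- For every word v over {α, c} of length 3n+1 with exactly n occurrences of c and 2n+1 occurrences of α, there is exactly one cyclic rotation v' of v such that the last letter of v' is α and the word obtained from v' by deleting its last letter is a projected walk, i.e., every prefix p of that word satisfies |p|_α ≤ 2|p|_c. -/

import Mathlib

inductive PStep | alpha | c
deriving DecidableEq

/-- The cyclic rotation of `v` by `i` positions. -/
def rot (v : List PStep) (i : ℕ) : List PStep := v.drop i ++ v.take i

/-- weight of a word: `c` counts +2, `alpha` counts −1. -/
def Wt (l : List PStep) : ℤ := 2 * (l.count PStep.c : ℤ) - (l.count PStep.alpha : ℤ)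

lemma Wt_append (a b : List PStep) : Wt (a ++ b) = Wt a + Wt b := by
  simp [Wt, List.count_append]; ring

lemma count_le_iff (l : List PStep) :
    l.count PStep.alpha ≤ 2 * l.count PStep.c ↔ 0 ≤ Wt l := by
  simp only [Wt]
  omega

/-- Cycle lemma for steps +2 / −1: among the `3n+1` cyclic rotations of a word
with `n` letters `c` and `2n+1` letters `α`, exactly one has all its proper
prefixes `p` satisfying `|p|_α ≤ 2|p|_c`. -/
theorem cycle_lemma (n : ℕ) (v : List PStep)
    (hlen : v.length = 3 * n + 1)
    (hc : v.count PStep.c = n)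
    (ha : v.count PStep.alpha = 2 * n + 1) :
    ∃! i : ℕ, i < 3 * n + 1 ∧
      ∀ m : ℕ, m < 3 * n + 1 →
        ((rot v i).take m).count PStep.alpha ≤ 2 * ((rot v i).take m).count PStep.c := by
  classical
  set L : ℕ := 3 * n + 1 with hL
  set S : ℕ → ℤ := fun i => Wt (v.take i) with hS
  have hSL : S L = -1 := by
    have : v.take L = v := by rw [← hlen]; exact List.take_length
    simp only [hS, this, Wt, hc, ha]
    push_cast
    ring
  have hS0 : S 0 = 0 := by simp [hS, Wt]
  -- weight of a rotation prefix, non-wrapping case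
  have low : ∀ i m : ℕ, m + i ≤ L → Wt ((rot v i).take m) = S (i + m) - S i := by
    intro i m hm
    have hdl : (v.drop i).length = L - i := by simp [hlen]
    have h1 : (rot v i).take m = (v.drop i).take m :=
      List.take_append_of_le_length (by omega)
    have h2 : v.take (i + m) = v.take i ++ (v.drop i).take m := List.take_add
    rw [h1]
    have := Wt_append (v.take i) ((v.drop i).take m)
    rw [← h2] at this
    simp only [hS]
    omega
  -- weight of a rotation prefix, wrapping case
  have high : ∀ i m : ℕ, i ≤ L → L - i ≤ m → m ≤ L →
      Wt ((rot v i).take m) = -1 - S i + S (m - (L - i)) := by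
    intro i m hi hm1 hm2
    have hdl : (v.drop i).length = L - i := by simp [hlen]
    have hmsplit : (v.drop i).length + (m - (L - i)) = m := by omega
    have h1 : (rot v i).take m = v.drop i ++ (v.take i).take (m - (L - i)) := by
      have := List.take_append (l₁ := v.drop i) (l₂ := v.take i) (i := m)
      rw [List.take_of_length_le (show (v.drop i).length ≤ m by omega), hdl] at this
      exact this
    have h2 : (v.take i).take (m - (L - i)) = v.take (m - (L - i)) := by
      rw [List.take_take]; congr 1; omega
    have h3 : Wt (v.take i) + Wt (v.drop i) = S L := by
      have := Wt_append (v.take i) (v.drop i)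
      rw [List.take_append_drop] at this
      have hv : v.take L = v := by rw [← hlen]; exact List.take_length
      simp only [hS, hv]; omega
    rw [h1, Wt_append, h2, hSL] at *
    simp only [hS] at *
    omega
  -- the "good rotation" predicate, in weight form
  have goodIff : ∀ i : ℕ,
      (∀ m : ℕ, m < L →
        ((rot v i).take m).count PStep.alpha ≤ 2 * ((rot v i).take m).count PStep.c)
      ↔ (∀ m : ℕ, m < L → 0 ≤ Wt ((rot v i).take m)) := by
    intro i
    constructor <;> intro h m hm <;> have := h m hm <;>
      first
        | exact (count_le_iff _).mp this
        | exact (count_le_iff _).mpr this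
  -- choose k : first index achieving the minimum of S on [0, L]
  obtain ⟨k₀, hk₀mem, hk₀min⟩ :=
    Finset.exists_min_image (Finset.range (L + 1)) S ⟨0, by simp⟩
  have hk₀L : k₀ ≤ L := by simpa [Nat.lt_succ_iff] using hk₀mem
  have hP : ∃ k, k ≤ L ∧ ∀ j ≤ L, S k ≤ S j := by
    exact ⟨k₀, hk₀L, fun j hj => hk₀min j (by simp [Nat.lt_succ_iff, hj])⟩
  set P : ℕ → Prop := fun k => k ≤ L ∧ ∀ j ≤ L, S k ≤ S j with hPdef
  have hPex : ∃ k, P k := hP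
  set k := Nat.find hPex with hk
  obtain ⟨hkL, hkmin⟩ : P k := Nat.find_spec hPex
  have hkfirst : ∀ j < k, S k < S j := by
    intro j hj
    have hnP : ¬ P j := Nat.find_min hPex hj
    have hjL : j ≤ L := le_trans (le_of_lt hj) hkL
    simp only [hPdef, not_and, not_forall] at hnP
    obtain ⟨j', hj', hlt⟩ := hnP hjL
    exact lt_of_le_of_lt (hkmin j' hj') (not_le.mp hlt)
  have hk1 : 1 ≤ k := by
    by_contra h
    have hk0 : k = 0 := by omega
    have := hkmin L le_rfl
    rw [hk0, hS0, hSL] at this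
    omega
  have hkneg : S k ≤ -1 := by
    have := hkmin L le_rfl; omega
  -- the chosen rotation index
  refine ⟨if k = L then 0 else k, ⟨?_, ?_⟩, ?_⟩
  · split <;> omega
  · -- existence: the chosen rotation is good
    rw [goodIff]
    intro m hm
    by_cases hkL' : k = L
    · -- i = 0
      rw [if_pos hkL']
      have hlow := low 0 m (by omega)
      rw [Nat.zero_add] at hlow
      have hfirst := hkfirst m (by omega)
      rw [hkL', hSL] at hfirst
      rw [hlow, hS0]
      omega
    · rw [if_neg hkL']
      by_cases hcase : m + k ≤ L
      · rw [low k m hcase]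
        have := hkmin (k + m) (by omega)
        omega
      · have hw := high k m hkL (by omega) (by omega)
        rw [hw]
        have hjlt : m - (L - k) < k := by omega
        have := hkfirst _ hjlt
        omega
  · -- uniqueness
    intro i ⟨hiL, hgood⟩
    rw [goodIff] at hgood
    by_cases hi0 : i = 0
    · -- then all S m ≥ 0 for m < L, so k = L
      subst hi0
      have hall : ∀ m < L, 0 ≤ S m := by
        intro m hm
        have hg := hgood m hm
        have hlow := low 0 m (by omega)
        rw [Nat.zero_add] at hlow
        rw [hlow, hS0] at hg
        omega
      have : k = L := by
        by_contra h
        have hkltL : k < L := by omega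
        have := hall k hkltL
        omega
      rw [if_pos this]
    · -- i ≥ 1 : show P i and i is first, hence i = k
      have hi1 : 1 ≤ i := by omega
      have hmin : ∀ j ≤ L, S i ≤ S j := by
        intro j hj
        rcases lt_or_ge j i with hji | hij
        · -- j < i : use wrap, S j > S i (for j ≥ 1), or S 0 = 0
          rcases Nat.eq_zero_or_pos j with rfl | hj1
          · rw [hS0]
            -- S i ≤ S L = -1 ≤ 0 via non-wrap m = L - i
            have := hgood (L - i) (by omega)
            rw [low i (L - i) (by omega)] at this
            have hLi : i + (L - i) = L := by omega
            rw [hLi, hSL] at this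
            omega
          · have hm : L - i ≤ j + (L - i) := by omega
            have := hgood (j + (L - i)) (by omega)
            rw [high i (j + (L - i)) (by omega) hm (by omega)] at this
            have : -1 - S i + S j ≥ 0 := by
              have hj' : j + (L - i) - (L - i) = j := by omega
              rw [hj'] at this; omega
            omega
        · -- i ≤ j : non-wrap
          rcases Nat.eq_or_lt_of_le hj with rfl | hjlt
          · have := hgood (L - i) (by omega)
            rw [low i (L - i) (by omega)] at this
            have hLi : i + (L - i) = L := by omega
            rw [hLi] at this
            omega
          · have := hgood (j - i) (by omega)
            rw [low i (j - i) (by omega)] at this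
            have hij' : i + (j - i) = j := by omega
            rw [hij'] at this
            omega
      have hPi : P i := ⟨by omega, hmin⟩
      have hki : k ≤ i := Nat.find_le hPi
      have : k = i := by
        rcases Nat.eq_or_lt_of_le hki with h | h
        · omega
        · exfalso
          have h1 := hkfirst  -- k < i impossible since S k minimal & first
          -- S k ≤ S i (from hmin? no: from hkmin) and S i ≤ S k from hmin
          have hik := hmin k hkL
          -- i ≥ 1, k < i, need: contradiction with i being "first"?
          -- use the wrap inequality for j = k (k ≥ 1): S k > S i
          have hm : L - i ≤ k + (L - i) := by omega
          have hg := hgood (k + (L - i)) (by omega)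
          rw [high i (k + (L - i)) (by omega) hm (by omega)] at hg
          have hj' : k + (L - i) - (L - i) = k := by omega
          rw [hj'] at hg
          have hki' := hkmin i (by omega)
          omega
      have hiL' : k ≠ L := by omega
      rw [if_neg hiL', this]
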